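/- Let H be a finitely generated abelian group. The group homomorphism from Λ³H to the product ∏_{n>0} Hom(Λ³(H^{(n)}), ℤ/nℤ) sending X to the family of linear maps (⟨-, X⟩^{(n)})_{n>0} is injective. Equivalently: if X ∈ Λ³H satisfies ⟨w, X⟩^{(n)} = 0 for every integer n > 0 and every w ∈ Λ³(H^{(n)}), then X = 0. -/

import Mathlib

/-- The decomposable element `x₁ ∧ x₂ ∧ x₃` of the third exterior power `Λ³M = ⋀[ℤ]^3 M`. -/
noncomputable def wedge3 {M : Type*} [AddCommGroup M] (x₁ x₂ x₃ : M) : ⋀[ℤ]^3 M :=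
  ⟨ExteriorAlgebra.ιMulti ℤ 3 ![x₁, x₂, x₃],
    ExteriorAlgebra.ιMulti_range ℤ 3 (Set.mem_range_self ![x₁, x₂, x₃])⟩

/-- The wedge `x₁ ∧ x₂ ∧ x₃` as an alternating map into the third exterior power. -/
noncomputable def wedgeAlt (H : Type*) [AddCommGroup H] : H [⋀^Fin 3]→ₗ[ℤ] ↥(⋀[ℤ]^3 H) :=
  (ExteriorAlgebra.ιMulti ℤ 3).codRestrict (⋀[ℤ]^3 H)
    (fun v => ExteriorAlgebra.ιMulti_range ℤ 3 (Set.mem_range_self v))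

lemma wedge3_eq_wedgeAlt {H : Type*} [AddCommGroup H] (x₁ x₂ x₃ : H) :
    wedge3 x₁ x₂ x₃ = wedgeAlt H ![x₁, x₂, x₃] := rfl

lemma update0 {α : Type*} (a b c x : α) : Function.update ![a,b,c] (0 : Fin 3) x = ![x,b,c] := by
  funext i; fin_cases i <;> simp [Function.update]
lemma update1 {α : Type*} (a b c x : α) : Function.update ![a,b,c] (1 : Fin 3) x = ![a,x,c] := by
  funext i; fin_cases i <;> simp [Function.update]
lemma update2 {α : Type*} (a b c x : α) : Function.update ![a,b,c] (2 : Fin 3) x = ![a,b,x] := by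
  funext i; fin_cases i <;> simp [Function.update]

lemma wedgeAlt_span (H : Type*) [AddCommGroup H] :
    Submodule.span ℤ (Set.range (wedgeAlt H)) = ⊤ := by
  apply Submodule.map_injective_of_injective (⋀[ℤ]^3 H).injective_subtype
  rw [Submodule.map_span, Submodule.map_top, Submodule.range_subtype, ← Set.range_comp]
  have h : (⇑(⋀[ℤ]^3 H).subtype ∘ ⇑(wedgeAlt H) : (Fin 3 → H) → ExteriorAlgebra ℤ H)
      = ExteriorAlgebra.ιMulti ℤ 3 := rfl
  rw [h, ExteriorAlgebra.ιMulti_span_fixedDegree]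

lemma multi_mem_span {H N : Type*} [AddCommGroup H] [AddCommGroup N] [Module ℤ N] {κ : Type*}
    (f : MultilinearMap ℤ (fun _ : Fin 3 => H) N) (g : κ → H)
    (htop : Submodule.span ℤ (Set.range g) = ⊤) (v : Fin 3 → H) :
    f v ∈ Submodule.span ℤ (Set.range fun u : Fin 3 → κ => f (g ∘ u)) := by
  classical
  have hmem : ∀ x : H, x ∈ Submodule.span ℤ (Set.range g) := fun x => htop ▸ Submodule.mem_top
  have h1 : ∀ (x1 x2 x0 : H), f ![x0, x1, x2] ∈
      Submodule.span ℤ (Set.range fun pr : κ × H × H => f ![g pr.1, pr.2.1, pr.2.2]) := by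
    intro x1 x2 x0
    induction hmem x0 using Submodule.span_induction with
    | mem x hx => obtain ⟨k, rfl⟩ := hx; exact Submodule.subset_span ⟨(k, x1, x2), rfl⟩
    | zero => rw [f.map_coord_zero (m := ![0, x1, x2]) 0 rfl]; exact Submodule.zero_mem _
    | add x y hx hy ihx ihy =>
      have := f.map_update_add ![x, x1, x2] 0 x y
      rw [update0, update0, update0] at this
      rw [this]; exact Submodule.add_mem _ ihx ihy
    | smul a x hx ih =>
      have := f.map_update_smul ![x, x1, x2] 0 a x
      rw [update0, update0] at this
      rw [this]; exact Submodule.smul_mem _ _ ih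
  have h2 : ∀ (k : κ) (x2 x1 : H), f ![g k, x1, x2] ∈
      Submodule.span ℤ (Set.range fun pr : κ × κ × H => f ![g pr.1, g pr.2.1, pr.2.2]) := by
    intro k x2 x1
    induction hmem x1 using Submodule.span_induction with
    | mem x hx => obtain ⟨k', rfl⟩ := hx; exact Submodule.subset_span ⟨(k, k', x2), rfl⟩
    | zero => rw [f.map_coord_zero (m := ![g k, 0, x2]) 1 rfl]; exact Submodule.zero_mem _
    | add x y hx hy ihx ihy =>
      have := f.map_update_add ![g k, x, x2] 1 x y
      rw [update1, update1, update1] at this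
      rw [this]; exact Submodule.add_mem _ ihx ihy
    | smul a x hx ih =>
      have := f.map_update_smul ![g k, x, x2] 1 a x
      rw [update1, update1] at this
      rw [this]; exact Submodule.smul_mem _ _ ih
  have h3 : ∀ (k k' : κ) (x2 : H), f ![g k, g k', x2] ∈
      Submodule.span ℤ (Set.range fun u : Fin 3 → κ => f (g ∘ u)) := by
    intro k k' x2
    induction hmem x2 using Submodule.span_induction with
    | mem x hx =>
      obtain ⟨k'', rfl⟩ := hx
      refine Submodule.subset_span ⟨![k, k', k''], ?_⟩
      show f (g ∘ ![k, k', k'']) = _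
      congr 1; funext i; fin_cases i <;> rfl
    | zero => rw [f.map_coord_zero (m := ![g k, g k', 0]) 2 rfl]; exact Submodule.zero_mem _
    | add x y hx hy ihx ihy =>
      have := f.map_update_add ![g k, g k', x] 2 x y
      rw [update2, update2, update2] at this
      rw [this]; exact Submodule.add_mem _ ihx ihy
    | smul a x hx ih =>
      have := f.map_update_smul ![g k, g k', x] 2 a x
      rw [update2, update2] at this
      rw [this]; exact Submodule.smul_mem _ _ ih
  have hv : v = ![v 0, v 1, v 2] := by funext i; fin_cases i <;> rfl
  have hS12 : Submodule.span ℤ (Set.range fun pr : κ × H × H => f ![g pr.1, pr.2.1, pr.2.2]) ≤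
      Submodule.span ℤ (Set.range fun pr : κ × κ × H => f ![g pr.1, g pr.2.1, pr.2.2]) := by
    rw [Submodule.span_le]; rintro _ ⟨⟨k, x1, x2⟩, rfl⟩; exact h2 k x2 x1
  have hS23 : Submodule.span ℤ (Set.range fun pr : κ × κ × H => f ![g pr.1, g pr.2.1, pr.2.2]) ≤
      Submodule.span ℤ (Set.range fun u : Fin 3 → κ => f (g ∘ u)) := by
    rw [Submodule.span_le]; rintro _ ⟨⟨k, k', x2⟩, rfl⟩; exact h3 k k' x2
  rw [hv]
  exact hS23 (hS12 (h1 (v 1) (v 2) (v 0)))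

lemma alt_mem_sorted_span {H N : Type*} [AddCommGroup H] [AddCommGroup N] [Module ℤ N]
    {κ : Type*} [LinearOrder κ]
    (f : H [⋀^Fin 3]→ₗ[ℤ] N) (g : κ → H) (u : Fin 3 → κ) :
    f (g ∘ u) ∈ Submodule.span ℤ
      (Set.range fun t : {t : Fin 3 → κ // StrictMono t} => f (g ∘ t.1)) := by
  classical
  by_cases hu : Function.Injective u
  · set σ := Tuple.sort u with hσ
    have hsm : StrictMono (u ∘ σ) :=
      (Tuple.monotone_sort u).strictMono_of_injective (hu.comp σ.injective)
    have hcomp : g ∘ u = (g ∘ (u ∘ σ)) ∘ ⇑σ⁻¹ := by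
      funext i; simp [Function.comp]
    rw [hcomp, f.map_perm]
    exact Submodule.smul_of_tower_mem
      (Submodule.span ℤ (Set.range fun t : {t : Fin 3 → κ // StrictMono t} => f (g ∘ t.1)))
      (Equiv.Perm.sign σ⁻¹)
      (Submodule.subset_span (Set.mem_range_self (⟨u ∘ σ, hsm⟩ : {t : Fin 3 → κ // StrictMono t})))
  · obtain ⟨a, b, hab, hne⟩ : ∃ a b, u a = u b ∧ a ≠ b := by
      by_contra h
      push_neg at h
      exact hu fun a b hab => h a b hab
    rw [f.map_eq_zero_of_eq (g ∘ u) (i := a) (j := b) (by simp [Function.comp, hab]) hne]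
    exact Submodule.zero_mem _

set_option maxHeartbeats 1600000 in
/-- Let `H` be a finitely generated abelian group. If `X ∈ Λ³H` satisfies
`⟨w, X⟩⁽ⁿ⁾ = 0` for every integer `n > 0` and every `w ∈ Λ³(H⁽ⁿ⁾)`, then `X = 0`.
Here `H⁽ⁿ⁾ = Hom(H, ℤ/nℤ)` and `⟨-,-⟩⁽ⁿ⁾ : Λ³(H⁽ⁿ⁾) × Λ³H → ℤ/nℤ` is the ℤ-bilinear pairing
determined on decomposable elements by
`⟨y₁∧y₂∧y₃, x₁∧x₂∧x₃⟩⁽ⁿ⁾ = ∑_{σ∈S₃} sgn(σ)·y_{σ(1)}(x₁)·y_{σ(2)}(x₂)·y_{σ(3)}(x₃)`. -/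
theorem stmt0 (H : Type*) [AddCommGroup H] (hFG : AddGroup.FG H)
    (pairing : ∀ n : ℕ, 0 < n → (⋀[ℤ]^3 (H →+ ZMod n)) →ₗ[ℤ] (⋀[ℤ]^3 H) →ₗ[ℤ] ZMod n)
    (hpair : ∀ (n : ℕ) (hn : 0 < n) (y₁ y₂ y₃ : H →+ ZMod n) (x₁ x₂ x₃ : H),
      pairing n hn (wedge3 y₁ y₂ y₃) (wedge3 x₁ x₂ x₃) =
        ∑ σ : Equiv.Perm (Fin 3), ((Equiv.Perm.sign σ : ℤ) : ZMod n) *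
          ∏ i : Fin 3, ![y₁, y₂, y₃] (σ i) (![x₁, x₂, x₃] i))
    (X : ⋀[ℤ]^3 H)
    (hX : ∀ (n : ℕ) (hn : 0 < n) (w : ⋀[ℤ]^3 (H →+ ZMod n)), pairing n hn w X = 0) :
    X = 0 := by
  classical
  haveI := hFG
  obtain ⟨r, ι, hfι, p, hp, eexp, ⟨ψ⟩⟩ := AddCommGroup.equiv_free_prod_directSum_zmod H
  haveI := hfι
  let q : ι → ℕ := fun i => p i ^ eexp i
  let κ := Fin r ⊕ ι
  let χ : H ≃ₗ[ℤ] (Fin r →₀ ℤ) × DirectSum ι fun i => ZMod (q i) := ψ.toIntLinearEquiv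
  let d : κ → ℕ := Sum.elim (fun _ => 0) q
  let gen : κ → H := Sum.elim (fun j => χ.symm (Finsupp.single j 1, 0))
      (fun i => χ.symm (0, DirectSum.of (fun i => ZMod (q i)) i 1))
  have hqnz : ∀ i, NeZero (q i) := fun i => ⟨pow_ne_zero _ (hp i).pos.ne'⟩
  have hann : ∀ k, (d k : ℤ) • gen k = 0 := by
    rintro (j | i)
    · simp [d]
    · show ((q i : ℤ)) • gen (Sum.inr i) = 0
      have h1 : ((q i : ℤ)) • (1 : ZMod (q i)) = 0 := by
        rw [zsmul_eq_mul, mul_one]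
        exact_mod_cast ZMod.natCast_self (q i)
      show ((q i : ℤ)) • χ.symm (0, DirectSum.of (fun i => ZMod (q i)) i 1) = 0
      rw [← map_smul, Prod.smul_mk, smul_zero,
        ← map_zsmul (DirectSum.of (fun i => ZMod (q i)) i), h1]
      simp
  have hfree : ∀ f : Fin r →₀ ℤ, χ.symm (f, 0) ∈ Submodule.span ℤ (Set.range gen) := by
    intro f
    induction f using Finsupp.induction_linear with
      | zero => rw [show χ.symm (0, 0) = 0 from map_zero χ.symm]; exact zero_mem _
      | add f g hf hg =>
        rw [show ((f + g, 0) : (Fin r →₀ ℤ) × DirectSum ι fun i => ZMod (q i)) = (f, 0) + (g, 0) by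
          rw [Prod.mk_add_mk, add_zero], map_add]
        exact add_mem hf hg
      | single a b =>
        have : χ.symm (Finsupp.single a b, 0) = b • gen (Sum.inl a) := by
          show _ = b • χ.symm (Finsupp.single a 1, 0)
          rw [← map_smul, Prod.smul_mk, smul_zero, Finsupp.smul_single, smul_eq_mul, mul_one]
        rw [this]
        exact Submodule.smul_mem _ _ (Submodule.subset_span ⟨Sum.inl a, rfl⟩)
  have htors : ∀ z : DirectSum ι fun i => ZMod (q i),
      χ.symm (0, z) ∈ Submodule.span ℤ (Set.range gen) := by
    intro z
    induction z using DirectSum.induction_on with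
      | zero => rw [show χ.symm (0, 0) = 0 from map_zero χ.symm]; exact zero_mem _
      | of i x =>
        haveI := hqnz i
        have hx : x = (x.val : ℤ) • (1 : ZMod (q i)) := by
          rw [zsmul_eq_mul, mul_one, Int.cast_natCast, ZMod.natCast_val, ZMod.cast_id]
        have : χ.symm (0, DirectSum.of (fun i => ZMod (q i)) i x)
            = (x.val : ℤ) • gen (Sum.inr i) := by
          show _ = (x.val : ℤ) • χ.symm (0, DirectSum.of (fun i => ZMod (q i)) i 1)
          rw [← map_smul, Prod.smul_mk, smul_zero,
            ← map_zsmul (DirectSum.of (fun i => ZMod (q i)) i), ← hx]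
        rw [this]
        exact Submodule.smul_mem _ _ (Submodule.subset_span ⟨Sum.inr i, rfl⟩)
      | add z w hz hw =>
        rw [show ((0, z + w) : (Fin r →₀ ℤ) × DirectSum ι fun i => ZMod (q i)) = (0, z) + (0, w) by
          rw [Prod.mk_add_mk, add_zero], map_add]
        exact add_mem hz hw
  have hspan : Submodule.span ℤ (Set.range gen) = ⊤ := by
    rw [eq_top_iff]
    rintro x -
    rw [← χ.symm_apply_apply x]
    obtain ⟨f, z⟩ := χ x
    have hsplit : χ.symm (f, z) = χ.symm (f, 0) + χ.symm (0, z) := by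
      rw [← map_add, Prod.mk_add_mk, add_zero, zero_add]
    rw [hsplit]
    exact add_mem (hfree f) (htors z)
  have dualex : ∀ (n : ℕ) (k : κ), n ∣ d k →
      ∃ φ : H →+ ZMod n, ∀ l, φ (gen l) = if k = l then 1 else 0 := by
    rintro n (j | i) hdvd
    · refine ⟨(Int.castAddHom (ZMod n)).comp ((Finsupp.applyAddHom j).comp
        ((AddMonoidHom.fst _ _).comp ψ.toAddMonoidHom)), ?_⟩
      rintro (j' | i')
      · have h1 : ψ (gen (Sum.inl j')) = (Finsupp.single j' 1, 0) := by
          show χ (χ.symm _) = _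
          exact χ.apply_symm_apply _
        simp only [AddMonoidHom.comp_apply, AddMonoidHom.coe_fst, AddEquiv.coe_toAddMonoidHom]
        rw [h1]
        by_cases hjj : j = j'
        · subst hjj
          simp [Finsupp.single_apply]
        · rw [if_neg (fun h => hjj (Sum.inl.inj h))]
          simp [Finsupp.single_apply, Ne.symm hjj]
      · have h1 : ψ (gen (Sum.inr i')) = (0, DirectSum.of (fun i => ZMod (q i)) i' 1) := by
          show χ (χ.symm _) = _
          exact χ.apply_symm_apply _
        simp only [AddMonoidHom.comp_apply, AddMonoidHom.coe_fst, AddEquiv.coe_toAddMonoidHom]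
        rw [h1]
        simp
    · have hdvd' : n ∣ q i := hdvd
      refine ⟨((ZMod.castHom hdvd' (ZMod n)).toAddMonoidHom).comp
        (((DirectSum.component ℤ ι (fun i => ZMod (q i)) i).toAddMonoidHom).comp
          ((AddMonoidHom.snd _ _).comp ψ.toAddMonoidHom)), ?_⟩
      rintro (j' | i')
      · have h1 : ψ (gen (Sum.inl j')) = (Finsupp.single j' 1, 0) := by
          show χ (χ.symm _) = _
          exact χ.apply_symm_apply _
        simp only [AddMonoidHom.comp_apply, AddMonoidHom.coe_snd, AddEquiv.coe_toAddMonoidHom]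
        rw [h1]
        simp
      · have h1 : ψ (gen (Sum.inr i')) = (0, DirectSum.of (fun i => ZMod (q i)) i' 1) := by
          show χ (χ.symm _) = _
          exact χ.apply_symm_apply _
        simp only [AddMonoidHom.comp_apply, AddMonoidHom.coe_snd, AddEquiv.coe_toAddMonoidHom]
        rw [h1]
        by_cases hii : i = i'
        · subst hii
          simp only [LinearMap.toAddMonoidHom_coe]
          rw [show DirectSum.of (fun i => ZMod (q i)) i 1
              = DirectSum.lof ℤ ι (fun i => ZMod (q i)) i 1 from rfl,
            DirectSum.component.of]
          simp [ZMod.cast_one hdvd']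
        · simp only [LinearMap.toAddMonoidHom_coe]
          rw [show DirectSum.of (fun i => ZMod (q i)) i' 1
              = DirectSum.lof ℤ ι (fun i => ZMod (q i)) i' 1 from rfl,
            DirectSum.component.of, dif_neg (Ne.symm hii),
            if_neg (fun h => hii (Sum.inr.inj h))]
          exact map_zero _
  -- now the exterior power side
  letI : LinearOrder κ := LinearOrder.lift' (Fintype.equivFin κ) (Fintype.equivFin κ).injective
  haveI hfT : Fintype {t : Fin 3 → κ // StrictMono t} := Subtype.fintype _
  set W : {t : Fin 3 → κ // StrictMono t} → ↥(⋀[ℤ]^3 H) :=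
    fun t => wedgeAlt H (gen ∘ t.1) with hW
  have hXmem : X ∈ Submodule.span ℤ (Set.range W) := by
    have h1 : X ∈ Submodule.span ℤ (Set.range ⇑(wedgeAlt H)) := by
      rw [wedgeAlt_span]; trivial
    have step : Submodule.span ℤ (Set.range ⇑(wedgeAlt H)) ≤ Submodule.span ℤ (Set.range W) := by
      rw [Submodule.span_le]
      rintro _ ⟨v, rfl⟩
      have h2 := multi_mem_span (wedgeAlt H).toMultilinearMap gen hspan v
      have step2 : Submodule.span ℤ
          (Set.range fun u : Fin 3 → κ => (wedgeAlt H).toMultilinearMap (gen ∘ u)) ≤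
          Submodule.span ℤ (Set.range W) := by
        rw [Submodule.span_le]
        rintro _ ⟨u, rfl⟩
        exact alt_mem_sorted_span (wedgeAlt H) gen u
      exact step2 h2
    exact step h1
  obtain ⟨c, hc⟩ := (Submodule.mem_span_range_iff_exists_fun ℤ).1 hXmem
  have key : ∀ t : {t : Fin 3 → κ // StrictMono t}, c t • W t = 0 := by
    intro t
    have heval : ∀ (n : ℕ) (hn : 0 < n) (φ : Fin 3 → (H →+ ZMod n)),
        (∀ a l, φ a (gen l) = if t.1 a = l then 1 else 0) → ((c t : ZMod n) = 0) := by
      intro n hn φ hφ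
      have orth : ∀ s : {t : Fin 3 → κ // StrictMono t},
          pairing n hn (wedge3 (φ 0) (φ 1) (φ 2)) (W s) = if t = s then 1 else 0 := by
        intro s
        have hWs : W s = wedge3 (gen (s.1 0)) (gen (s.1 1)) (gen (s.1 2)) := by
          rw [wedge3_eq_wedgeAlt]
          show wedgeAlt H (gen ∘ s.1) = _
          congr 1
          funext i; fin_cases i <;> rfl
        rw [hWs, hpair]
        have hterm : ∀ σ : Equiv.Perm (Fin 3),
            ∏ i : Fin 3, ![φ 0, φ 1, φ 2] (σ i) (![gen (s.1 0), gen (s.1 1), gen (s.1 2)] i)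
            = ∏ i : Fin 3, (if t.1 (σ i) = s.1 i then (1 : ZMod n) else 0) := by
          intro σ
          apply Finset.prod_congr rfl
          intro i _
          have hv1 : ∀ j : Fin 3, ![φ 0, φ 1, φ 2] j = φ j := by
            intro j; fin_cases j <;> rfl
          have hv2 : ∀ j : Fin 3, ![gen (s.1 0), gen (s.1 1), gen (s.1 2)] j = gen (s.1 j) := by
            intro j; fin_cases j <;> rfl
          rw [hv1, hv2, hφ]
        by_cases hts : t = s
        · subst hts
          rw [if_pos rfl]
          rw [Finset.sum_eq_single 1]
          · rw [hterm]
            simp [Equiv.Perm.sign_one, Equiv.Perm.one_apply]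
          · intro σ _ hσ
            rw [hterm]
            obtain ⟨i, hi⟩ : ∃ i, σ i ≠ i := by
              by_contra h; push_neg at h; exact hσ (Equiv.ext h)
            rw [Finset.prod_eq_zero (Finset.mem_univ i)
              (show (if (t.1 (σ i) : κ) = t.1 i then (1 : ZMod n) else 0) = 0 from
                if_neg (fun h => hi (t.2.injective h))), mul_zero]
          · intro h; exact absurd (Finset.mem_univ 1) h
        · rw [if_neg hts]
          have hts' : t.1 ≠ s.1 := fun h => hts (Subtype.ext h)
          obtain ⟨i, hi⟩ : ∃ i, ∀ a, t.1 a ≠ s.1 i := by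
            by_contra hcon
            push_neg at hcon
            apply hts'
            haveI : WellFoundedLT (Fin 3) := Finite.to_wellFoundedLT
            rw [← StrictMono.range_inj t.2 s.2]
            have h1 : (Finset.univ.image t.1).card = 3 := by
              rw [Finset.card_image_of_injective _ t.2.injective, Finset.card_univ,
                Fintype.card_fin]
            have h2 : (Finset.univ.image s.1).card = 3 := by
              rw [Finset.card_image_of_injective _ s.2.injective, Finset.card_univ,
                Fintype.card_fin]
            have hsub' : Finset.univ.image s.1 ⊆ Finset.univ.image t.1 := by
              intro x hx
              simp only [Finset.mem_image] at hx ⊢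
              obtain ⟨a, -, rfl⟩ := hx
              obtain ⟨b, hb⟩ := hcon a
              exact ⟨b, Finset.mem_univ b, hb⟩
            have heq := Finset.eq_of_subset_of_card_le hsub' (by rw [h1, h2])
            rw [← Set.image_univ, ← Set.image_univ, ← Finset.coe_univ, ← Finset.coe_image,
              ← Finset.coe_image, heq]
          apply Finset.sum_eq_zero
          intro σ _
          rw [hterm, Finset.prod_eq_zero (Finset.mem_univ i)
            (show (if (t.1 (σ i) : κ) = s.1 i then (1 : ZMod n) else 0) = 0 from
              if_neg (hi (σ i))), mul_zero]
      have hpx : pairing n hn (wedge3 (φ 0) (φ 1) (φ 2)) X = (c t : ZMod n) := by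
        rw [← hc, map_sum]
        rw [Finset.sum_eq_single t]
        · rw [map_smul, orth t, if_pos rfl]
          show c t • (1 : ZMod n) = _
          rw [zsmul_eq_mul, mul_one]
        · intro s _ hst
          rw [map_smul, orth s, if_neg (fun h => hst h.symm), smul_zero]
        · intro h; exact absurd (Finset.mem_univ t) h
      rw [hX n hn _] at hpx
      exact hpx.symm
    set m := Nat.gcd (Nat.gcd (d (t.1 0)) (d (t.1 1))) (d (t.1 2)) with hm
    by_cases hm0 : m = 0
    · have hall : ∀ a : Fin 3, d (t.1 a) = 0 := by
        have h12 := Nat.gcd_eq_zero_iff.1 (hm ▸ hm0)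
        have h34 := Nat.gcd_eq_zero_iff.1 h12.1
        intro a; fin_cases a
        exacts [h34.1, h34.2, h12.2]
      have hc0 : c t = 0 := by
        have hdvdall : ∀ n : ℕ, 0 < n → (n : ℤ) ∣ c t := by
          intro n hn
          haveI : NeZero n := ⟨hn.ne'⟩
          choose φ hφ using fun a : Fin 3 => dualex n (t.1 a) (by rw [hall a]; exact dvd_zero n)
          exact (ZMod.intCast_zmod_eq_zero_iff_dvd _ _).1 (heval n hn φ (fun a l => hφ a l))
        by_contra hne
        have h1 := Int.le_of_dvd (abs_pos.2 hne)
          ((dvd_abs _ _).2 (hdvdall ((c t).natAbs + 1) (Nat.succ_pos _)))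
        rw [Int.abs_eq_natAbs] at h1
        omega
      rw [hc0, zero_smul]
    · have hmpos : 0 < m := Nat.pos_of_ne_zero hm0
      haveI : NeZero m := ⟨hm0⟩
      have hdvd3 : ∀ a : Fin 3, m ∣ d (t.1 a) := by
        intro a; fin_cases a
        · exact dvd_trans (Nat.gcd_dvd_left _ _) (Nat.gcd_dvd_left _ _)
        · exact dvd_trans (Nat.gcd_dvd_left _ _) (Nat.gcd_dvd_right _ _)
        · exact Nat.gcd_dvd_right _ _
      choose φ hφ using fun a : Fin 3 => dualex m (t.1 a) (hdvd3 a)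
      obtain ⟨e, he⟩ : (m : ℤ) ∣ c t :=
        (ZMod.intCast_zmod_eq_zero_iff_dvd _ _).1 (heval m hmpos φ (fun a l => hφ a l))
      obtain ⟨a0, a1, a2, hbez⟩ : ∃ a0 a1 a2 : ℤ,
          (m : ℤ) = (d (t.1 0)) * a0 + (d (t.1 1)) * a1 + (d (t.1 2)) * a2 := by
        refine ⟨(d (t.1 0)).gcdA (d (t.1 1)) * ((Nat.gcd (d (t.1 0)) (d (t.1 1))).gcdA (d (t.1 2))),
          (d (t.1 0)).gcdB (d (t.1 1)) * ((Nat.gcd (d (t.1 0)) (d (t.1 1))).gcdA (d (t.1 2))),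
          (Nat.gcd (d (t.1 0)) (d (t.1 1))).gcdB (d (t.1 2)), ?_⟩
        rw [hm, Nat.gcd_eq_gcd_ab, Nat.gcd_eq_gcd_ab (d (t.1 0)) (d (t.1 1))]
        ring
      have hzero : ∀ a : Fin 3, (d (t.1 a) : ℤ) • W t = 0 := by
        intro a
        have h1 := (wedgeAlt H).toMultilinearMap.map_update_smul (gen ∘ t.1) a
          ((d (t.1 a) : ℤ)) ((gen ∘ t.1) a)
        rw [Function.update_eq_self] at h1
        have h2 : (d (t.1 a) : ℤ) • (gen ∘ t.1) a = 0 := hann (t.1 a)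
        rw [h2] at h1
        rw [(wedgeAlt H).toMultilinearMap.map_coord_zero
          (m := Function.update (gen ∘ t.1) a 0) a (Function.update_self a 0 _)] at h1
        exact h1.symm
      have hmW : (m : ℤ) • W t = 0 := by
        have z : ∀ (x : ℤ) (a : Fin 3), ((d (t.1 a) : ℤ) * x) • W t = 0 := by
          intro x a
          rw [mul_comm, mul_smul, hzero a, smul_zero]
        rw [hbez, add_smul, add_smul, z a0 0, z a1 1, z a2 2, add_zero, add_zero]
      calc c t • W t = ((m : ℤ) * e) • W t := by rw [← he]
        _ = e • ((m : ℤ) • W t) := by rw [mul_comm, mul_smul]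
        _ = 0 := by rw [hmW, smul_zero]
  rw [← hc]
  exact Finset.sum_eq_zero fun t _ => key t
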